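/- For Gaussian measures N1 = N(mu1, sigma^2 I), N2 = N(mu2, sigma^2 I) on R^d and any nonnegative measurable g with finite second moment under N1, we have E_{N1}[g] - E_{N2}[g] ≤ sqrt(E_{N1}[g^2]) · sqrt( min{ exp(||mu1-mu2||^2/(2 sigma^2)) - 1 , 1 } ). -/

import Mathlib

open MeasureTheory

/-- The density of `N(μ, σ² I)` on `ℝ^d`. -/
noncomputable def gaussPdf (d : ℕ) (μ : EuclideanSpace ℝ (Fin d)) (σ : ℝ)
    (z : EuclideanSpace ℝ (Fin d)) : ℝ :=
  (2 * Real.pi * σ ^ 2) ^ (-(d : ℝ) / 2) * Real.exp (-‖z - μ‖ ^ 2 / (2 * σ ^ 2))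

/-- The Gaussian measure `N(μ, σ² I)` on `ℝ^d`. -/
noncomputable def gaussMeasure (d : ℕ) (μ : EuclideanSpace ℝ (Fin d)) (σ : ℝ) :
    Measure (EuclideanSpace ℝ (Fin d)) :=
  volume.withDensity (fun z => ENNReal.ofReal (gaussPdf d μ σ z))

open Real
open scoped ENNReal

variable {d : ℕ} {σ : ℝ}

lemma gaussPdf_pos (hσ : 0 < σ) (μ z : EuclideanSpace ℝ (Fin d)) : 0 < gaussPdf d μ σ z := by
  unfold gaussPdf
  have h : (0:ℝ) < 2 * Real.pi * σ ^ 2 := by positivity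
  positivity

lemma continuous_gaussPdf (μ : EuclideanSpace ℝ (Fin d)) : Continuous (gaussPdf d μ σ) := by
  unfold gaussPdf
  fun_prop

lemma measurable_gaussPdf (μ : EuclideanSpace ℝ (Fin d)) : Measurable (gaussPdf d μ σ) :=
  (continuous_gaussPdf μ).measurable

lemma integrable_expquad (hσ : 0 < σ) (c : EuclideanSpace ℝ (Fin d)) :
    Integrable (fun z : EuclideanSpace ℝ (Fin d) => rexp (-‖z - c‖ ^ 2 / (2 * σ ^ 2))) := by
  have hb : (0:ℝ) < 1/(2*σ^2) := by positivity
  have base : Integrable (fun v : EuclideanSpace ℝ (Fin d) => rexp (-(1/(2*σ^2)) * ‖v‖^2)) := by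
    have := GaussianFourier.integrable_cexp_neg_mul_sq_norm_add
      (V := EuclideanSpace ℝ (Fin d)) (b := ((1/(2*σ^2) : ℝ):ℂ))
      (by rw [Complex.ofReal_re]; exact hb) 0 0
    simp only [zero_mul, add_zero] at this
    have h2 := this.re
    simpa [← Complex.ofReal_pow, ← Complex.ofReal_mul, ← Complex.ofReal_neg,
      ← Complex.ofReal_exp] using h2
  have h := base.comp_sub_right c
  convert h using 2 with z
  ring_nf

lemma integral_expquad (hσ : 0 < σ) (c : EuclideanSpace ℝ (Fin d)) :
    ∫ z : EuclideanSpace ℝ (Fin d), rexp (-‖z - c‖ ^ 2 / (2 * σ ^ 2))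
      = (2 * Real.pi * σ ^ 2) ^ ((d : ℝ) / 2) := by
  have hb : (0:ℝ) < 1/(2*σ^2) := by positivity
  have h1 : ∀ z : EuclideanSpace ℝ (Fin d), rexp (-‖z - c‖ ^ 2 / (2 * σ ^ 2))
      = (fun v : EuclideanSpace ℝ (Fin d) => rexp (-(1/(2*σ^2)) * ‖v‖^2)) (z - c) := by
    intro z; simp only; ring_nf
  simp_rw [h1]
  rw [integral_sub_right_eq_self (fun v : EuclideanSpace ℝ (Fin d) => rexp (-(1/(2*σ^2)) * ‖v‖^2)) c]
  rw [GaussianFourier.integral_rexp_neg_mul_sq_norm hb, finrank_euclideanSpace_fin]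
  congr 1
  have : σ ^ 2 ≠ 0 := by positivity
  field_simp

lemma integrable_gaussPdf (hσ : 0 < σ) (μ : EuclideanSpace ℝ (Fin d)) :
    Integrable (gaussPdf d μ σ) := by
  unfold gaussPdf
  exact (integrable_expquad hσ μ).const_mul _

lemma integral_gaussPdf (hσ : 0 < σ) (μ : EuclideanSpace ℝ (Fin d)) :
    ∫ z, gaussPdf d μ σ z = 1 := by
  unfold gaussPdf
  rw [integral_const_mul, integral_expquad hσ μ]
  rw [← Real.rpow_add (by positivity), show (-(d:ℝ)/2 + (d:ℝ)/2) = 0 by ring, Real.rpow_zero]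

lemma norm_combo (a : ℝ) (w v : EuclideanSpace ℝ (Fin d)) :
    (1-a) * ‖w - a • v‖^2 + a * ‖w + (1-a) • v‖^2 = ‖w‖^2 + a*(1-a)*‖v‖^2 := by
  have h1 : ‖w - a • v‖^2 = ‖w‖^2 - 2 * inner ℝ w (a • v) + ‖a • v‖^2 := norm_sub_sq_real w (a • v)
  have h2 : ‖w + (1-a) • v‖^2 = ‖w‖^2 + 2 * inner ℝ w ((1-a) • v) + ‖(1-a) • v‖^2 :=
    norm_add_sq_real w ((1-a) • v)
  have h3 : (inner ℝ w (a • v) : ℝ) = a * inner ℝ w v := real_inner_smul_right w v a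
  have h4 : (inner ℝ w ((1-a) • v) : ℝ) = (1-a) * inner ℝ w v := real_inner_smul_right w v (1-a)
  have h5 : ‖a • v‖^2 = a^2 * ‖v‖^2 := by
    rw [norm_smul]; simp [mul_pow, sq_abs]
  have h6 : ‖(1-a) • v‖^2 = (1-a)^2 * ‖v‖^2 := by
    rw [norm_smul]; simp [mul_pow, sq_abs]
  rw [h1, h2, h3, h4, h5, h6]; ring

lemma gaussPdf_rpow_mul (hσ : 0 < σ) (μ1 μ2 z : EuclideanSpace ℝ (Fin d)) (a : ℝ) :
    gaussPdf d μ1 σ z ^ (1-a) * gaussPdf d μ2 σ z ^ a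
      = rexp (-(a*(1-a)) * (‖μ1 - μ2‖^2 / (2*σ^2))) * gaussPdf d (μ1 - a • (μ1 - μ2)) σ z := by
  have hC : (0:ℝ) < (2 * Real.pi * σ ^ 2) ^ (-(d : ℝ) / 2) := by
    have h : (0:ℝ) < 2 * Real.pi * σ ^ 2 := by positivity
    positivity
  have hv1 : z - μ1 = (z - (μ1 - a • (μ1 - μ2))) - a • (μ1 - μ2) := by abel
  have hv2 : z - μ2 = (z - (μ1 - a • (μ1 - μ2))) + (1-a) • (μ1 - μ2) := by
    have h : (1-a) • (μ1 - μ2) = (μ1 - μ2) - a • (μ1-μ2) := by rw [sub_smul, one_smul]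
    rw [h]; abel
  have key : (1-a) * ‖z - μ1‖^2 + a * ‖z - μ2‖^2
      = ‖z - (μ1 - a • (μ1 - μ2))‖^2 + a*(1-a)*‖μ1 - μ2‖^2 := by
    rw [hv1, hv2]; exact norm_combo a _ _
  unfold gaussPdf
  rw [mul_rpow hC.le (Real.exp_pos _).le, mul_rpow hC.le (Real.exp_pos _).le,
    ← Real.exp_mul, ← Real.exp_mul]
  have hσ2 : (2*σ^2) ≠ 0 := by positivity
  calc ((2 * π * σ ^ 2) ^ (-(d:ℝ) / 2)) ^ (1 - a) * rexp (-‖z - μ1‖ ^ 2 / (2 * σ ^ 2) * (1 - a)) *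
        (((2 * π * σ ^ 2) ^ (-(d:ℝ) / 2)) ^ a * rexp (-‖z - μ2‖ ^ 2 / (2 * σ ^ 2) * a))
      = (((2 * π * σ ^ 2) ^ (-(d:ℝ) / 2)) ^ (1 - a) * ((2 * π * σ ^ 2) ^ (-(d:ℝ) / 2)) ^ a) *
        (rexp (-‖z - μ1‖ ^ 2 / (2 * σ ^ 2) * (1 - a)) * rexp (-‖z - μ2‖ ^ 2 / (2 * σ ^ 2) * a)) := by
        ring
    _ = (2 * π * σ ^ 2) ^ (-(d:ℝ) / 2) *
        rexp (-((1-a) * ‖z - μ1‖^2 + a * ‖z - μ2‖^2) / (2*σ^2)) := by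
        rw [← Real.rpow_add hC, ← Real.exp_add]
        congr 1
        · rw [show (1-a) + a = 1 by ring, Real.rpow_one]
        · field_simp; ring
    _ = rexp (-(a*(1-a)) * (‖μ1 - μ2‖^2 / (2*σ^2))) *
        ((2 * π * σ ^ 2) ^ (-(d:ℝ) / 2) * rexp (-‖z - (μ1 - a • (μ1 - μ2))‖ ^ 2 / (2 * σ ^ 2))) := by
        rw [key]
        rw [show -(‖z - (μ1 - a • (μ1 - μ2))‖ ^ 2 + a * (1 - a) * ‖μ1 - μ2‖ ^ 2) / (2 * σ ^ 2)
          = (-(a*(1-a)) * (‖μ1 - μ2‖^2 / (2*σ^2))) + (-‖z - (μ1 - a • (μ1 - μ2))‖ ^ 2 / (2 * σ ^ 2)) by ring,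
          Real.exp_add]
        ring

lemma integrable_gaussPdf_rpow_mul (hσ : 0 < σ) (μ1 μ2 : EuclideanSpace ℝ (Fin d)) (a : ℝ) :
    Integrable (fun z => gaussPdf d μ1 σ z ^ (1-a) * gaussPdf d μ2 σ z ^ a) := by
  simp_rw [fun z => gaussPdf_rpow_mul hσ μ1 μ2 z a]
  exact (integrable_gaussPdf hσ _).const_mul _

lemma integral_gaussPdf_rpow_mul (hσ : 0 < σ) (μ1 μ2 : EuclideanSpace ℝ (Fin d)) (a : ℝ) :
    ∫ z, gaussPdf d μ1 σ z ^ (1-a) * gaussPdf d μ2 σ z ^ a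
      = rexp (-(a*(1-a)) * (‖μ1 - μ2‖^2 / (2*σ^2))) := by
  simp_rw [fun z => gaussPdf_rpow_mul hσ μ1 μ2 z a]
  rw [integral_const_mul, integral_gaussPdf hσ, mul_one]

lemma exp_ineq {K : ℝ} (hK : 0 ≤ K) :
    rexp (3/4 * K) - rexp (-(1/4) * K) ≤ rexp K - 1 := by
  have hA : 1 ≤ rexp (K/4) := by
    rw [← Real.exp_zero]; exact Real.exp_le_exp.2 (by linarith)
  have h1 : rexp (3/4 * K) = rexp (K/4) ^ (3:ℕ) := by
    rw [← Real.exp_nat_mul]; congr 1; ring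
  have h2 : rexp K = rexp (K/4) ^ (4:ℕ) := by
    rw [← Real.exp_nat_mul]; congr 1; ring
  have h3 : rexp (-(1/4) * K) * rexp (K/4) = 1 := by
    rw [← Real.exp_add, show -(1/4)*K + K/4 = 0 by ring, Real.exp_zero]
  have h4 : (0:ℝ) < rexp (-(1/4) * K) := Real.exp_pos _
  have h5 : 1 ≤ rexp (K/4)^(4:ℕ) := one_le_pow₀ hA
  have key : 0 ≤ (rexp (K/4)^(4:ℕ) - 1) * (rexp (K/4) - 1) :=
    mul_nonneg (by linarith) (by linarith)
  rw [h1, h2]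
  nlinarith [key, h3, h4, hA]

lemma key_pointwise {x y : ℝ} (hx : 0 < x) (hy : 0 < y) :
    max (x-y) 0 ^2 / x + max (y-x) 0 ^2 / y
      ≤ x ^ ((3:ℝ)/2) * y ^ (-(1:ℝ)/2) - 2 * (x ^ ((1:ℝ)/2) * y ^ ((1:ℝ)/2))
        + x ^ (-(1:ℝ)/2) * y ^ ((3:ℝ)/2) := by
  obtain ⟨u, hu, rfl⟩ : ∃ u, 0 < u ∧ x = u * u :=
    ⟨Real.sqrt x, Real.sqrt_pos.2 hx, (Real.mul_self_sqrt hx.le).symm⟩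
  obtain ⟨v, hv, rfl⟩ : ∃ v, 0 < v ∧ y = v * v :=
    ⟨Real.sqrt y, Real.sqrt_pos.2 hy, (Real.mul_self_sqrt hy.le).symm⟩
  have ru : ∀ c : ℝ, (u*u) ^ c = u ^ (2*c) := by
    intro c
    rw [show u*u = u^(2:ℝ) by rw [show (2:ℝ) = ((2:ℕ):ℝ) by norm_num, Real.rpow_natCast]; ring,
      ← Real.rpow_mul hu.le]
  have rv : ∀ c : ℝ, (v*v) ^ c = v ^ (2*c) := by
    intro c
    rw [show v*v = v^(2:ℝ) by rw [show (2:ℝ) = ((2:ℕ):ℝ) by norm_num, Real.rpow_natCast]; ring,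
      ← Real.rpow_mul hv.le]
  rw [ru, rv, ru, rv, ru, rv]
  have eu3 : u ^ (2*((3:ℝ)/2)) = u^(3:ℕ) := by
    rw [show 2*((3:ℝ)/2) = ((3:ℕ):ℝ) by norm_num, Real.rpow_natCast]
  have ev3 : v ^ (2*((3:ℝ)/2)) = v^(3:ℕ) := by
    rw [show 2*((3:ℝ)/2) = ((3:ℕ):ℝ) by norm_num, Real.rpow_natCast]
  have eu1 : u ^ (2*((1:ℝ)/2)) = u := by
    rw [show 2*((1:ℝ)/2) = (1:ℝ) by norm_num, Real.rpow_one]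
  have ev1 : v ^ (2*((1:ℝ)/2)) = v := by
    rw [show 2*((1:ℝ)/2) = (1:ℝ) by norm_num, Real.rpow_one]
  have eum : u ^ (2*(-(1:ℝ)/2)) = u⁻¹ := by
    rw [show 2*(-(1:ℝ)/2) = (-1:ℝ) by norm_num, Real.rpow_neg_one]
  have evm : v ^ (2*(-(1:ℝ)/2)) = v⁻¹ := by
    rw [show 2*(-(1:ℝ)/2) = (-1:ℝ) by norm_num, Real.rpow_neg_one]
  rw [eu3, ev3, eu1, ev1, eum, evm]
  have hRHS : u^(3:ℕ) * v⁻¹ - 2 * (u * v) + u⁻¹ * v^(3:ℕ) = (u*u - v*v)^2 / (u*v) := by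
    field_simp
    ring
  rw [hRHS]
  rcases le_total (v*v) (u*u) with h | h
  · rw [max_eq_left (by linarith), max_eq_right (by linarith)]
    have huv : u * v ≤ u * u := by nlinarith
    calc (u*u - v*v)^2 / (u*u) + 0^2 / (v*v) = (u*u - v*v)^2 / (u*u) := by
          rw [zero_pow (by norm_num), zero_div, add_zero]
      _ ≤ (u*u - v*v)^2 / (u*v) :=
          div_le_div_of_nonneg_left (sq_nonneg _) (by positivity) huv
  · rw [max_eq_right (by linarith), max_eq_left (by linarith)]
    have huv : u * v ≤ v * v := by nlinarith
    calc 0^2 / (u*u) + (v*v - u*u)^2 / (v*v) = (v*v - u*u)^2 / (v*v) := by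
          rw [zero_pow (by norm_num), zero_div, zero_add]
      _ ≤ (u*u - v*v)^2 / (u*v) := by
          rw [show (u*u - v*v)^2 = (v*v - u*u)^2 by ring]
          exact div_le_div_of_nonneg_left (sq_nonneg _) (by positivity) huv

lemma reflect_measurePreserving (c : EuclideanSpace ℝ (Fin d)) :
    MeasurePreserving (fun z : EuclideanSpace ℝ (Fin d) => c - z) volume volume := by
  have h : (fun z : EuclideanSpace ℝ (Fin d) => c - z)
      = (fun z : EuclideanSpace ℝ (Fin d) => c + z) ∘ (fun z : EuclideanSpace ℝ (Fin d) => -z) := by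
    funext z; simp [sub_eq_add_neg]
  rw [h]
  exact (measurePreserving_add_left volume c).comp (Measure.measurePreserving_neg volume)

lemma gaussPdf_reflect (μ1 μ2 z : EuclideanSpace ℝ (Fin d)) :
    gaussPdf d μ1 σ ((μ1 + μ2) - z) = gaussPdf d μ2 σ z := by
  unfold gaussPdf
  rw [show μ1 + μ2 - z - μ1 = μ2 - z by abel, norm_sub_rev]

set_option maxHeartbeats 2000000 in
theorem stmt_2 (d : ℕ) (mu1 mu2 : EuclideanSpace ℝ (Fin d)) (σ : ℝ) (hσ : 0 < σ)
    (g : EuclideanSpace ℝ (Fin d) → ℝ) (hg : Measurable g) (hg0 : ∀ z, 0 ≤ g z)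
    (hg2 : Integrable (fun z => g z ^ 2) (gaussMeasure d mu1 σ)) :
    (∫ z, g z ∂(gaussMeasure d mu1 σ)) - ∫ z, g z ∂(gaussMeasure d mu2 σ) ≤
      Real.sqrt (∫ z, g z ^ 2 ∂(gaussMeasure d mu1 σ)) *
        Real.sqrt (min (Real.exp (‖mu1 - mu2‖ ^ 2 / (2 * σ ^ 2)) - 1) 1) := by
  classical
  set p1 : EuclideanSpace ℝ (Fin d) → ℝ := gaussPdf d mu1 σ with hp1def
  set p2 : EuclideanSpace ℝ (Fin d) → ℝ := gaussPdf d mu2 σ with hp2def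
  set K : ℝ := ‖mu1 - mu2‖ ^ 2 / (2 * σ ^ 2) with hKdef
  have hK0 : 0 ≤ K := by positivity
  have hp1pos : ∀ z, 0 < p1 z := gaussPdf_pos hσ mu1
  have hp2pos : ∀ z, 0 < p2 z := gaussPdf_pos hσ mu2
  have mp1 : Measurable p1 := measurable_gaussPdf mu1
  have mp2 : Measurable p2 := measurable_gaussPdf mu2
  -- abbreviations
  set m12 : EuclideanSpace ℝ (Fin d) → ℝ := fun z => max (p1 z - p2 z) 0 with hm12def
  set m21 : EuclideanSpace ℝ (Fin d) → ℝ := fun z => max (p2 z - p1 z) 0 with hm21def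
  have mm12 : Measurable m12 := (mp1.sub mp2).max measurable_const
  have mm21 : Measurable m21 := (mp2.sub mp1).max measurable_const
  have hm12nn : ∀ z, 0 ≤ m12 z := fun z => le_max_right _ _
  have hm21nn : ∀ z, 0 ≤ m21 z := fun z => le_max_right _ _
  set q12 : EuclideanSpace ℝ (Fin d) → ℝ := fun z => m12 z ^ 2 / p1 z with hq12def
  set q21 : EuclideanSpace ℝ (Fin d) → ℝ := fun z => m21 z ^ 2 / p2 z with hq21def
  have mq12 : Measurable q12 := (mm12.pow_const 2).div mp1
  have mq21 : Measurable q21 := (mm21.pow_const 2).div mp2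
  have hq12nn : ∀ z, 0 ≤ q12 z := fun z => div_nonneg (sq_nonneg _) (hp1pos z).le
  have hq21nn : ∀ z, 0 ≤ q21 z := fun z => div_nonneg (sq_nonneg _) (hp2pos z).le
  set QE : ℝ≥0∞ := ∫⁻ z, ENNReal.ofReal (q12 z) with hQEdef
  set QE' : ℝ≥0∞ := ∫⁻ z, ENNReal.ofReal (q21 z) with hQE'def
  -- moments
  have hJ : ∀ a : ℝ, ∫ z, p1 z ^ (1-a) * p2 z ^ a = rexp (-(a*(1-a)) * K) := by
    intro a
    rw [hp1def, hp2def, integral_gaussPdf_rpow_mul hσ mu1 mu2 a, hKdef]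
  have hJi : ∀ a : ℝ, Integrable (fun z => p1 z ^ (1-a) * p2 z ^ a) :=
    fun a => integrable_gaussPdf_rpow_mul hσ mu1 mu2 a
  -- reflection symmetry
  have hQsymm : QE' = QE := by
    rw [hQE'def, hQEdef]
    rw [← (reflect_measurePreserving (d := d) (mu1 + mu2)).lintegral_comp
      (mq12.ennreal_ofReal)]
    congr 1
    funext z
    congr 1
    rw [hq12def, hq21def]
    simp only
    rw [hm12def, hm21def]
    simp only
    rw [hp1def, hp2def]
    simp only [gaussPdf_reflect mu1 mu2 z]
    rw [show gaussPdf d mu2 σ (mu1 + mu2 - z) = gaussPdf d mu1 σ z by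
      rw [show mu1 + mu2 = mu2 + mu1 by abel]; exact gaussPdf_reflect mu2 mu1 z]
  -- moment computations with explicit exponents
  have T1 : (∫ z, p1 z ^ ((3:ℝ)/2) * p2 z ^ (-(1:ℝ)/2)) = rexp (3/4*K)
      ∧ Integrable (fun z => p1 z ^ ((3:ℝ)/2) * p2 z ^ (-(1:ℝ)/2)) := by
    have e : (fun z => p1 z ^ ((3:ℝ)/2) * p2 z ^ (-(1:ℝ)/2))
        = (fun z => p1 z ^ (1 - (-(1:ℝ)/2)) * p2 z ^ (-(1:ℝ)/2)) := by norm_num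
    constructor
    · rw [e, hJ]; congr 1; ring
    · rw [e]; exact hJi _
  have T2 : (∫ z, p1 z ^ ((1:ℝ)/2) * p2 z ^ ((1:ℝ)/2)) = rexp (-(1/4)*K)
      ∧ Integrable (fun z => p1 z ^ ((1:ℝ)/2) * p2 z ^ ((1:ℝ)/2)) := by
    have e : (fun z => p1 z ^ ((1:ℝ)/2) * p2 z ^ ((1:ℝ)/2))
        = (fun z => p1 z ^ (1 - ((1:ℝ)/2)) * p2 z ^ ((1:ℝ)/2)) := by norm_num
    constructor
    · rw [e, hJ]; congr 1; ring
    · rw [e]; exact hJi _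
  have T3 : (∫ z, p1 z ^ (-(1:ℝ)/2) * p2 z ^ ((3:ℝ)/2)) = rexp (3/4*K)
      ∧ Integrable (fun z => p1 z ^ (-(1:ℝ)/2) * p2 z ^ ((3:ℝ)/2)) := by
    have e : (fun z => p1 z ^ (-(1:ℝ)/2) * p2 z ^ ((3:ℝ)/2))
        = (fun z => p1 z ^ (1 - ((3:ℝ)/2)) * p2 z ^ ((3:ℝ)/2)) := by norm_num
    constructor
    · rw [e, hJ]; congr 1; ring
    · rw [e]; exact hJi _
  have T4 : (∫ z, p1 z ^ (-1:ℝ) * p2 z ^ (2:ℝ)) = rexp (2*K)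
      ∧ Integrable (fun z => p1 z ^ (-1:ℝ) * p2 z ^ (2:ℝ)) := by
    have e : (fun z => p1 z ^ (-1:ℝ) * p2 z ^ (2:ℝ))
        = (fun z => p1 z ^ (1 - (2:ℝ)) * p2 z ^ (2:ℝ)) := by norm_num
    constructor
    · rw [e, hJ]; congr 1; ring
    · rw [e]; exact hJi _
  -- the chi-square type bound on QE
  have hQ1 : QE ≤ ENNReal.ofReal 1 := by
    have step : ∀ z, q12 z ≤ p1 z := by
      intro z
      have h1 : m12 z ≤ p1 z := max_le (by linarith [(hp2pos z).le]) (hp1pos z).le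
      have h2 : m12 z ^ 2 ≤ p1 z ^ 2 := by nlinarith [hm12nn z]
      have h3 : m12 z ^ 2 / p1 z ≤ p1 z ^ 2 / p1 z := by gcongr; exact (hp1pos z).le
      have h4 : p1 z ^ 2 / p1 z = p1 z := by
        rw [sq, mul_div_assoc, div_self (hp1pos z).ne', mul_one]
      calc q12 z = m12 z ^ 2 / p1 z := rfl
        _ ≤ p1 z ^ 2 / p1 z := h3
        _ = p1 z := h4
    calc QE ≤ ∫⁻ z, ENNReal.ofReal (p1 z) :=
          lintegral_mono fun z => ENNReal.ofReal_le_ofReal (step z)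
      _ = ENNReal.ofReal (∫ z, p1 z) :=
          (ofReal_integral_eq_lintegral_ofReal (hp1def ▸ integrable_gaussPdf hσ mu1)
            (Filter.Eventually.of_forall fun z => (hp1pos z).le)).symm
      _ = ENNReal.ofReal 1 := by rw [hp1def, integral_gaussPdf hσ mu1]
  have hQ2 : QE ≤ ENNReal.ofReal (rexp K - 1) := by
    set RHSf : EuclideanSpace ℝ (Fin d) → ℝ := fun z =>
      p1 z ^ ((3:ℝ)/2) * p2 z ^ (-(1:ℝ)/2) - 2 * (p1 z ^ ((1:ℝ)/2) * p2 z ^ ((1:ℝ)/2))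
        + p1 z ^ (-(1:ℝ)/2) * p2 z ^ ((3:ℝ)/2) with hRHSfdef
    have hRHSfnn : ∀ z, 0 ≤ RHSf z := by
      intro z
      have := key_pointwise (hp1pos z) (hp2pos z)
      have h0 : 0 ≤ max (p1 z - p2 z) 0 ^2 / p1 z + max (p2 z - p1 z) 0 ^2 / p2 z :=
        add_nonneg (hq12nn z) (hq21nn z)
      exact le_trans h0 this
    have hRHSfint : Integrable RHSf := by
      exact (T1.2.sub (T2.2.const_mul 2)).add T3.2
    have hRHSfval : ∫ z, RHSf z = 2 * rexp (3/4*K) - 2 * rexp (-(1/4)*K) := by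
      have iT2' : Integrable (fun z => 2 * (p1 z ^ ((1:ℝ)/2) * p2 z ^ ((1:ℝ)/2))) :=
        T2.2.const_mul 2
      have iSub : Integrable (fun z =>
          p1 z ^ ((3:ℝ)/2) * p2 z ^ (-(1:ℝ)/2)
            - 2 * (p1 z ^ ((1:ℝ)/2) * p2 z ^ ((1:ℝ)/2))) := T1.2.sub iT2'
      rw [hRHSfdef]
      rw [integral_add iSub T3.2, integral_sub T1.2 iT2', integral_const_mul, T1.1, T2.1, T3.1]
      ring
    have hsum : QE + QE' ≤ ENNReal.ofReal (2 * rexp (3/4*K) - 2 * rexp (-(1/4)*K)) := by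
      calc QE + QE' = ∫⁻ z, (ENNReal.ofReal (q12 z) + ENNReal.ofReal (q21 z)) :=
            (lintegral_add_left mq12.ennreal_ofReal _).symm
        _ = ∫⁻ z, ENNReal.ofReal (q12 z + q21 z) := by
            congr 1; funext z; rw [ENNReal.ofReal_add (hq12nn z) (hq21nn z)]
        _ ≤ ∫⁻ z, ENNReal.ofReal (RHSf z) :=
            lintegral_mono fun z =>
              ENNReal.ofReal_le_ofReal (key_pointwise (hp1pos z) (hp2pos z))
        _ = ENNReal.ofReal (∫ z, RHSf z) :=
            (ofReal_integral_eq_lintegral_ofReal hRHSfint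
              (Filter.Eventually.of_forall hRHSfnn)).symm
        _ = ENNReal.ofReal (2 * rexp (3/4*K) - 2 * rexp (-(1/4)*K)) := by rw [hRHSfval]
    rw [hQsymm] at hsum
    have hc0 : 0 ≤ rexp (3/4*K) - rexp (-(1/4)*K) := by
      have : rexp (-(1/4)*K) ≤ rexp (3/4*K) := Real.exp_le_exp.2 (by linarith)
      linarith
    have h2 : (2:ℝ≥0∞) * QE ≤ (2:ℝ≥0∞) * ENNReal.ofReal (rexp (3/4*K) - rexp (-(1/4)*K)) := by
      calc (2:ℝ≥0∞) * QE = QE + QE := by rw [two_mul]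
        _ ≤ ENNReal.ofReal (2 * rexp (3/4*K) - 2 * rexp (-(1/4)*K)) := hsum
        _ = (2:ℝ≥0∞) * ENNReal.ofReal (rexp (3/4*K) - rexp (-(1/4)*K)) := by
            rw [← ENNReal.ofReal_ofNat 2, ← ENNReal.ofReal_mul (by norm_num)]
            congr 1; ring
    have h3 : QE ≤ ENNReal.ofReal (rexp (3/4*K) - rexp (-(1/4)*K)) :=
      (ENNReal.mul_le_mul_iff_right (by norm_num) (by norm_num)).1 h2
    exact h3.trans (ENNReal.ofReal_le_ofReal (by linarith [exp_ineq hK0]))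
  have hQbound : QE ≤ ENNReal.ofReal (min (rexp K - 1) 1) := by
    rcases le_total (rexp K - 1) 1 with h | h
    · rw [min_eq_left h]; exact hQ2
    · rw [min_eq_right h]; exact hQ1
  -- set A and m
  set A : ℝ := ∫ z, g z ^ 2 ∂(gaussMeasure d mu1 σ) with hAdef
  have hA0 : 0 ≤ A := integral_nonneg fun z => sq_nonneg _
  set m : ℝ := min (rexp K - 1) 1 with hmdef
  have hm0 : 0 ≤ m := le_min (by nlinarith [Real.one_le_exp hK0]) zero_le_one
  -- withDensity to volume-lintegral conversions
  have hwd : ∀ (μ0 : EuclideanSpace ℝ (Fin d)) (f : EuclideanSpace ℝ (Fin d) → ℝ),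
      Measurable f → (∀ z, 0 ≤ f z) →
      ∫⁻ z, ENNReal.ofReal (f z) ∂(gaussMeasure d μ0 σ)
        = ∫⁻ z, ENNReal.ofReal (f z * gaussPdf d μ0 σ z) := by
    intro μ0 f hf hf0
    rw [gaussMeasure,
      lintegral_withDensity_eq_lintegral_mul volume (measurable_gaussPdf μ0).ennreal_ofReal
        hf.ennreal_ofReal]
    congr 1
    funext z
    simp only [Pi.mul_apply]
    rw [← ENNReal.ofReal_mul (gaussPdf_pos hσ μ0 z).le, mul_comm]
  have hI1 : ∫ z, g z ∂(gaussMeasure d mu1 σ)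
      = (∫⁻ z, ENNReal.ofReal (g z * p1 z)).toReal := by
    rw [integral_eq_lintegral_of_nonneg_ae (Filter.Eventually.of_forall hg0)
      hg.aestronglyMeasurable, hwd mu1 g hg hg0, hp1def]
  have hI2 : ∫ z, g z ∂(gaussMeasure d mu2 σ)
      = (∫⁻ z, ENNReal.ofReal (g z * p2 z)).toReal := by
    rw [integral_eq_lintegral_of_nonneg_ae (Filter.Eventually.of_forall hg0)
      hg.aestronglyMeasurable, hwd mu2 g hg hg0, hp2def]
  have hI3 : ENNReal.ofReal A = ∫⁻ z, ENNReal.ofReal (g z ^ 2 * p1 z) := by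
    rw [hAdef, ofReal_integral_eq_lintegral_ofReal hg2
      (Filter.Eventually.of_forall fun z => sq_nonneg _),
      hwd mu1 (fun z => g z ^ 2) (hg.pow_const 2) (fun z => sq_nonneg _), hp1def]
  -- Hoelder
  have holder : ∀ w : EuclideanSpace ℝ (Fin d) → ℝ, Measurable w → (∀ z, 0 ≤ w z) →
      ∫⁻ z, ENNReal.ofReal (g z * w z)
        ≤ (∫⁻ z, ENNReal.ofReal (g z ^ 2 * p1 z)) ^ ((1:ℝ)/2)
          * (∫⁻ z, ENNReal.ofReal (w z ^ 2 / p1 z)) ^ ((1:ℝ)/2) := by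
    intro w hw hw0
    have hpq : Real.HolderConjugate 2 2 := Real.holderConjugate_iff.mpr ⟨one_lt_two, by norm_num⟩
    have hFm : Measurable fun z => ENNReal.ofReal (g z * Real.sqrt (p1 z)) :=
      (hg.mul mp1.sqrt).ennreal_ofReal
    have hHm : Measurable fun z => ENNReal.ofReal (w z / Real.sqrt (p1 z)) :=
      (hw.div mp1.sqrt).ennreal_ofReal
    have key := ENNReal.lintegral_mul_le_Lp_mul_Lq volume hpq hFm.aemeasurable hHm.aemeasurable
    simp only [Pi.mul_apply] at key
    have eFH : ∀ z, ENNReal.ofReal (g z * Real.sqrt (p1 z))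
        * ENNReal.ofReal (w z / Real.sqrt (p1 z)) = ENNReal.ofReal (g z * w z) := by
      intro z
      have hs : Real.sqrt (p1 z) ≠ 0 := ne_of_gt (Real.sqrt_pos.2 (hp1pos z))
      rw [← ENNReal.ofReal_mul (mul_nonneg (hg0 z) (Real.sqrt_nonneg _))]
      congr 1
      field_simp
    have eF2 : ∀ z, (ENNReal.ofReal (g z * Real.sqrt (p1 z))) ^ (2:ℝ)
        = ENNReal.ofReal (g z ^ 2 * p1 z) := by
      intro z
      rw [show (2:ℝ) = ((2:ℕ):ℝ) by norm_num, ENNReal.rpow_natCast,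
        ← ENNReal.ofReal_pow (mul_nonneg (hg0 z) (Real.sqrt_nonneg _))]
      congr 1
      rw [mul_pow, Real.sq_sqrt (hp1pos z).le]
    have eH2 : ∀ z, (ENNReal.ofReal (w z / Real.sqrt (p1 z))) ^ (2:ℝ)
        = ENNReal.ofReal (w z ^ 2 / p1 z) := by
      intro z
      rw [show (2:ℝ) = ((2:ℕ):ℝ) by norm_num, ENNReal.rpow_natCast,
        ← ENNReal.ofReal_pow (div_nonneg (hw0 z) (Real.sqrt_nonneg _))]
      congr 1
      rw [div_pow, Real.sq_sqrt (hp1pos z).le]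
    calc ∫⁻ z, ENNReal.ofReal (g z * w z)
        = ∫⁻ z, ENNReal.ofReal (g z * Real.sqrt (p1 z))
            * ENNReal.ofReal (w z / Real.sqrt (p1 z)) :=
          lintegral_congr fun z => (eFH z).symm
      _ ≤ (∫⁻ z, (ENNReal.ofReal (g z * Real.sqrt (p1 z))) ^ (2:ℝ)) ^ ((1:ℝ)/2)
            * (∫⁻ z, (ENNReal.ofReal (w z / Real.sqrt (p1 z))) ^ (2:ℝ)) ^ ((1:ℝ)/2) := key
      _ = (∫⁻ z, ENNReal.ofReal (g z ^ 2 * p1 z)) ^ ((1:ℝ)/2)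
            * (∫⁻ z, ENNReal.ofReal (w z ^ 2 / p1 z)) ^ ((1:ℝ)/2) := by
          rw [lintegral_congr eF2, lintegral_congr eH2]
  -- bound on the main Hoelder term
  have hG1 : ∫⁻ z, ENNReal.ofReal (g z * m12 z)
      ≤ ENNReal.ofReal (Real.sqrt A * Real.sqrt m) := by
    have h := holder m12 mm12 hm12nn
    have hq : (∫⁻ z, ENNReal.ofReal (m12 z ^ 2 / p1 z)) = QE := rfl
    rw [hq, ← hI3] at h
    calc ∫⁻ z, ENNReal.ofReal (g z * m12 z)
        ≤ (ENNReal.ofReal A) ^ ((1:ℝ)/2) * QE ^ ((1:ℝ)/2) := h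
      _ ≤ (ENNReal.ofReal A) ^ ((1:ℝ)/2) * (ENNReal.ofReal m) ^ ((1:ℝ)/2) := by
          exact mul_le_mul_right (ENNReal.rpow_le_rpow hQbound (by norm_num)) _
      _ = ENNReal.ofReal (Real.sqrt A * Real.sqrt m) := by
          rw [ENNReal.ofReal_rpow_of_nonneg hA0 (by norm_num : (0:ℝ) ≤ 1/2),
            ENNReal.ofReal_rpow_of_nonneg hm0 (by norm_num : (0:ℝ) ≤ 1/2),
            ← ENNReal.ofReal_mul (by positivity), Real.sqrt_eq_rpow, Real.sqrt_eq_rpow]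
  -- finiteness of auxiliary terms
  have hg2' : Integrable (fun z => g z ^ 2 * p1 z) volume := by
    have := (integrable_withDensity_iff (μ := volume)
      (f := fun z => ENNReal.ofReal (gaussPdf d mu1 σ z)) (measurable_gaussPdf mu1).ennreal_ofReal
      (Filter.Eventually.of_forall fun z => ENNReal.ofReal_lt_top)
      (g := fun z => g z ^ 2)).1 hg2
    have e : (fun z => g z ^ 2 * (ENNReal.ofReal (gaussPdf d mu1 σ z)).toReal)
        = fun z => g z ^ 2 * p1 z := by
      funext z
      rw [ENNReal.toReal_ofReal (gaussPdf_pos hσ mu1 z).le, hp1def]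
    rwa [e] at this
  have hfinGP1 : (∫⁻ z, ENNReal.ofReal (g z * p1 z)) < ⊤ := by
    have hint : Integrable (fun z => p1 z + g z ^ 2 * p1 z) volume :=
      (hp1def ▸ integrable_gaussPdf hσ mu1).add hg2'
    calc (∫⁻ z, ENNReal.ofReal (g z * p1 z))
        ≤ ∫⁻ z, ENNReal.ofReal (p1 z + g z ^ 2 * p1 z) := by
          apply lintegral_mono
          intro z
          apply ENNReal.ofReal_le_ofReal
          nlinarith [hp1pos z, sq_nonneg (g z - 1), hg0 z, sq_nonneg (g z)]
      _ = ENNReal.ofReal (∫ z, (p1 z + g z ^ 2 * p1 z)) :=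
          (ofReal_integral_eq_lintegral_ofReal hint
            (Filter.Eventually.of_forall fun z => by
              show (0:ℝ) ≤ p1 z + g z ^ 2 * p1 z
              nlinarith [hp1pos z, sq_nonneg (g z)])).symm
      _ < ⊤ := ENNReal.ofReal_lt_top
  have hfinG21 : (∫⁻ z, ENNReal.ofReal (g z * m21 z)) < ⊤ := by
    have h := holder m21 mm21 hm21nn
    have hq2 : (∫⁻ z, ENNReal.ofReal (m21 z ^ 2 / p1 z))
        ≤ ENNReal.ofReal (rexp (2*K)) := by
      calc (∫⁻ z, ENNReal.ofReal (m21 z ^ 2 / p1 z))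
          ≤ ∫⁻ z, ENNReal.ofReal (p1 z ^ (-1:ℝ) * p2 z ^ (2:ℝ)) := by
            apply lintegral_mono
            intro z
            apply ENNReal.ofReal_le_ofReal
            have h1 : m21 z ≤ p2 z := max_le (by linarith [(hp1pos z).le]) (hp2pos z).le
            have h2 : m21 z ^ 2 ≤ p2 z ^ 2 := by nlinarith [hm21nn z]
            have h3 : p1 z ^ (-1:ℝ) * p2 z ^ (2:ℝ) = p2 z ^ 2 / p1 z := by
              rw [Real.rpow_neg_one, show (2:ℝ) = ((2:ℕ):ℝ) by norm_num,
                Real.rpow_natCast, div_eq_inv_mul]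
            rw [h3]
            gcongr
            exact (hp1pos z).le
        _ = ENNReal.ofReal (∫ z, p1 z ^ (-1:ℝ) * p2 z ^ (2:ℝ)) :=
            (ofReal_integral_eq_lintegral_ofReal T4.2
              (Filter.Eventually.of_forall fun z => by
                show (0:ℝ) ≤ p1 z ^ (-1:ℝ) * p2 z ^ (2:ℝ)
                exact mul_nonneg (Real.rpow_nonneg (hp1pos z).le _)
                  (Real.rpow_nonneg (hp2pos z).le _))).symm
        _ = ENNReal.ofReal (rexp (2*K)) := by rw [T4.1]
    calc (∫⁻ z, ENNReal.ofReal (g z * m21 z))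
        ≤ (∫⁻ z, ENNReal.ofReal (g z ^ 2 * p1 z)) ^ ((1:ℝ)/2)
          * (∫⁻ z, ENNReal.ofReal (m21 z ^ 2 / p1 z)) ^ ((1:ℝ)/2) := h
      _ ≤ (ENNReal.ofReal A) ^ ((1:ℝ)/2) * (ENNReal.ofReal (rexp (2*K))) ^ ((1:ℝ)/2) := by
          rw [← hI3]
          exact mul_le_mul_right (ENNReal.rpow_le_rpow hq2 (by norm_num)) _
      _ < ⊤ := ENNReal.mul_lt_top
          (ENNReal.rpow_lt_top_of_nonneg (by norm_num) ENNReal.ofReal_ne_top)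
          (ENNReal.rpow_lt_top_of_nonneg (by norm_num) ENNReal.ofReal_ne_top)
  have hfinGP2 : (∫⁻ z, ENNReal.ofReal (g z * p2 z)) < ⊤ := by
    calc (∫⁻ z, ENNReal.ofReal (g z * p2 z))
        ≤ ∫⁻ z, (ENNReal.ofReal (g z * p1 z) + ENNReal.ofReal (g z * m21 z)) := by
          apply lintegral_mono
          intro z
          show ENNReal.ofReal (g z * p2 z)
            ≤ ENNReal.ofReal (g z * p1 z) + ENNReal.ofReal (g z * m21 z)
          rw [← ENNReal.ofReal_add (mul_nonneg (hg0 z) (hp1pos z).le)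
            (mul_nonneg (hg0 z) (hm21nn z))]
          apply ENNReal.ofReal_le_ofReal
          nlinarith [le_max_left (p2 z - p1 z) 0, hg0 z]
      _ = (∫⁻ z, ENNReal.ofReal (g z * p1 z)) + ∫⁻ z, ENNReal.ofReal (g z * m21 z) :=
          lintegral_add_left (hg.mul mp1).ennreal_ofReal _
      _ < ⊤ := ENNReal.add_lt_top.2 ⟨hfinGP1, hfinG21⟩
  -- main chain
  have hmain : (∫⁻ z, ENNReal.ofReal (g z * p1 z))
      ≤ (∫⁻ z, ENNReal.ofReal (g z * p2 z)) + ENNReal.ofReal (Real.sqrt A * Real.sqrt m) := by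
    calc (∫⁻ z, ENNReal.ofReal (g z * p1 z))
        ≤ ∫⁻ z, (ENNReal.ofReal (g z * p2 z) + ENNReal.ofReal (g z * m12 z)) := by
          apply lintegral_mono
          intro z
          show ENNReal.ofReal (g z * p1 z)
            ≤ ENNReal.ofReal (g z * p2 z) + ENNReal.ofReal (g z * m12 z)
          rw [← ENNReal.ofReal_add (mul_nonneg (hg0 z) (hp2pos z).le)
            (mul_nonneg (hg0 z) (hm12nn z))]
          apply ENNReal.ofReal_le_ofReal
          nlinarith [le_max_left (p1 z - p2 z) 0, hg0 z]
      _ = (∫⁻ z, ENNReal.ofReal (g z * p2 z)) + ∫⁻ z, ENNReal.ofReal (g z * m12 z) :=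
          lintegral_add_left (hg.mul mp2).ennreal_ofReal _
      _ ≤ (∫⁻ z, ENNReal.ofReal (g z * p2 z)) + ENNReal.ofReal (Real.sqrt A * Real.sqrt m) :=
          add_le_add_right hG1 _
  -- conclusion
  rw [hI1, hI2]
  have hr0 : 0 ≤ Real.sqrt A * Real.sqrt m :=
    mul_nonneg (Real.sqrt_nonneg _) (Real.sqrt_nonneg _)
  have hRfin : (∫⁻ z, ENNReal.ofReal (g z * p2 z)) + ENNReal.ofReal (Real.sqrt A * Real.sqrt m)
      ≠ ⊤ := by
    exact (ENNReal.add_lt_top.2 ⟨hfinGP2, ENNReal.ofReal_lt_top⟩).ne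
  have h1 := ENNReal.toReal_mono hRfin hmain
  rw [ENNReal.toReal_add hfinGP2.ne ENNReal.ofReal_ne_top, ENNReal.toReal_ofReal hr0] at h1
  linarith
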